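/- Let λ ∈ Λ(n,r), let ν ∈ {1,...,n-1}, let 0 ≤ m ≤ λ_{ν+1}, and consider the parabolic (Young) subgroups of the symmetric group Σ_r: Σ_λ, the row stabilizer of the standard λ-tableau, and Σ_{λ(ν,m)}, the row stabilizer for the composition λ(ν,m) = (λ_1, ..., λ_ν + m, λ_{ν+1} - m, ..., λ_n). Let H be a subgroup of Σ_λ of the form U_1 × ... × U_n (with U_s a subgroup of the s-th factor), and suppose U_{ν+1} equals the full (ν+1)-st factor Σ_{λ_{ν+1}}. Then (Σ_{λ(ν,m)} ∩ Σ_λ) · H = Σ_λ. -/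

import Mathlib

/-- The (0-indexed) row of position `ρ` in the basic tableau of shape `lam`. -/
noncomputable def rowOf (lam : ℕ → ℕ) (ρ : ℕ) : ℕ :=
  sInf {k : ℕ | ρ < ∑ i ∈ Finset.range (k + 1), lam i}

/-- The Young (parabolic) subgroup `Σ_λ ≤ Σ_r`: permutations preserving the rows of
the basic `λ`-tableau. -/
def young (r : ℕ) (lam : ℕ → ℕ) : Subgroup (Equiv.Perm (Fin r)) where
  carrier := {σ | ∀ ρ : Fin r, rowOf lam (σ ρ).val = rowOf lam ρ.val}
  one_mem' := fun ρ => rfl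
  mul_mem' := by
    intro σ τ hσ hτ ρ
    simpa [Equiv.Perm.mul_apply, hτ ρ] using hσ (τ ρ)
  inv_mem' := by
    intro σ hσ ρ
    simpa using (hσ (σ⁻¹ ρ)).symm

lemma mem_young_iff {r : ℕ} {lam : ℕ → ℕ} {σ : Equiv.Perm (Fin r)} :
    σ ∈ young r lam ↔ ∀ ρ : Fin r, rowOf lam (σ ρ).val = rowOf lam ρ.val := Iff.rfl

lemma rowOf_lt {lam : ℕ → ℕ} {x k : ℕ} (h : x < ∑ i ∈ Finset.range (k + 1), lam i) :
    x < ∑ i ∈ Finset.range (rowOf lam x + 1), lam i := by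
  have hne : {k : ℕ | x < ∑ i ∈ Finset.range (k + 1), lam i}.Nonempty := ⟨k, h⟩
  exact Nat.sInf_mem hne

lemma rowOf_eq_of {lam : ℕ → ℕ} {x k : ℕ} (h1 : x < ∑ i ∈ Finset.range (k + 1), lam i)
    (h2 : ∀ j < k, ¬ x < ∑ i ∈ Finset.range (j + 1), lam i) : rowOf lam x = k := by
  have hk : k ∈ {k : ℕ | x < ∑ i ∈ Finset.range (k + 1), lam i} := h1
  refine le_antisymm (Nat.sInf_le hk) ?_
  by_contra hlt
  push_neg at hlt
  exact h2 _ hlt (Nat.sInf_mem ⟨k, hk⟩)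

lemma rowOf_min {lam : ℕ → ℕ} {x j : ℕ} (h : j < rowOf lam x) :
    ¬ x < ∑ i ∈ Finset.range (j + 1), lam i := by
  intro hc
  have hj : j ∈ {k : ℕ | x < ∑ i ∈ Finset.range (k + 1), lam i} := hc
  have : rowOf lam x ≤ j := Nat.sInf_le hj
  omega

/-- Key combinatorial lemma: away from row `v`, the rows of `λ` and `λ(ν,m)` agree. -/
lemma row_eq_aux (lam : ℕ → ℕ) (v m x : ℕ) (hv1 : 1 ≤ v) (hm : m ≤ lam v)
    (hx : ∃ k, x < ∑ i ∈ Finset.range (k + 1), lam i)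
    (hne : rowOf lam x ≠ v) :
    rowOf (fun k => if k = v - 1 then lam (v - 1) + m
          else if k = v then lam v - m else lam k) x = rowOf lam x := by
  set lam' : ℕ → ℕ := fun k => if k = v - 1 then lam (v - 1) + m
          else if k = v then lam v - m else lam k with hlam'
  obtain ⟨k0, hk0⟩ := hx
  set k := rowOf lam x with hk
  have hxk : x < ∑ i ∈ Finset.range (k + 1), lam i := rowOf_lt hk0
  have hvv : v - 1 ≠ v := by omega
  -- For j ≥ v the partial sums agree
  have hB : ∀ j, v ≤ j →
      ∑ i ∈ Finset.range (j + 1), lam' i = ∑ i ∈ Finset.range (j + 1), lam i := by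
    intro j hj
    have hterm : ∀ i, lam' i + (if i = v then m else 0)
        = lam i + (if i = v - 1 then m else 0) := by
      intro i
      by_cases h1 : i = v - 1
      · subst h1; simp [hlam', hvv]
      · by_cases h2 : i = v
        · subst h2; simp [hlam', hvv, h1]; omega
        · simp [hlam', h1, h2]
    have key : (∑ i ∈ Finset.range (j + 1), lam' i) + m
        = (∑ i ∈ Finset.range (j + 1), lam i) + m := by
      have e1 : ∑ i ∈ Finset.range (j + 1), (lam' i + (if i = v then m else 0))
          = ∑ i ∈ Finset.range (j + 1), (lam i + (if i = v - 1 then m else 0)) :=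
        Finset.sum_congr rfl fun i _ => hterm i
      rw [Finset.sum_add_distrib, Finset.sum_add_distrib] at e1
      rw [Finset.sum_ite_eq' (Finset.range (j + 1)) v (fun _ => m)] at e1
      rw [Finset.sum_ite_eq' (Finset.range (j + 1)) (v - 1) (fun _ => m)] at e1
      simp only [Finset.mem_range] at e1
      rw [if_pos (by omega), if_pos (by omega)] at e1
      exact e1
    omega
  -- For j < v the `lam'` partial sums dominate
  have hA : ∀ j, j < v →
      ∑ i ∈ Finset.range (j + 1), lam i ≤ ∑ i ∈ Finset.range (j + 1), lam' i := by
    intro j hj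
    refine Finset.sum_le_sum fun i hi => ?_
    simp only [Finset.mem_range] at hi
    by_cases h1 : i = v - 1
    · subst h1; simp [hlam', hvv]
    · have h2 : i ≠ v := by omega
      simp [hlam', h1, h2]
  -- For j < v - 1 the partial sums agree
  have hA' : ∀ j, j + 1 ≤ v - 1 →
      ∑ i ∈ Finset.range (j + 1), lam' i = ∑ i ∈ Finset.range (j + 1), lam i := by
    intro j hj
    refine Finset.sum_congr rfl fun i hi => ?_
    simp only [Finset.mem_range] at hi
    have h1 : i ≠ v - 1 := by omega
    have h2 : i ≠ v := by omega
    simp [hlam', h1, h2]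
  rcases lt_or_gt_of_ne hne with hkv | hkv
  · -- k < v
    refine rowOf_eq_of (lt_of_lt_of_le hxk (hA k hkv)) fun j hj => ?_
    rw [hA' j (by omega)]
    exact rowOf_min (by omega)
  · -- v < k
    refine rowOf_eq_of ?_ fun j hj => ?_
    · rw [hB k (by omega)]; exact hxk
    · by_cases hjv : v ≤ j
      · rw [hB j hjv]; exact rowOf_min (by omega)
      · have h1 : ∑ i ∈ Finset.range (j + 1), lam' i ≤ ∑ i ∈ Finset.range (v + 1), lam' i :=
          Finset.sum_le_sum_of_subset (Finset.range_subset_range.mpr (by omega))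
        have h2 : ¬ x < ∑ i ∈ Finset.range (v + 1), lam i := rowOf_min (by omega)
        rw [hB v le_rfl] at h1
        omega

/-- Lemma 1 of the paper: if `H ≤ Σ_λ` is a product subgroup `U_1 × ⋯ × U_n` whose
`(ν+1)`-st factor is the full symmetric group on row `ν+1` (expressed here by: `H`
contains every permutation supported on row `ν+1`, written 0-indexed as row `v`),
then `(Σ_{λ(ν,m)} ∩ Σ_λ) · H = Σ_λ` for any `0 ≤ m ≤ λ_{ν+1}`. -/
theorem stmt_11 (n r : ℕ) (hn : 2 ≤ n) (hr : 0 < r)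
    (lam : ℕ → ℕ) (hsupp : ∀ k, n ≤ k → lam k = 0)
    (hsum : ∑ k ∈ Finset.range n, lam k = r)
    (v : ℕ) (hv1 : 1 ≤ v) (hv2 : v ≤ n - 1) (m : ℕ) (hm : m ≤ lam v)
    (H : Subgroup (Equiv.Perm (Fin r))) (hH : H ≤ young r lam)
    (hfull : ∀ σ : Equiv.Perm (Fin r),
      (∀ ρ : Fin r, rowOf lam ρ.val ≠ v → σ ρ = ρ) → σ ∈ H) :
    ∀ σ : Equiv.Perm (Fin r), σ ∈ young r lam ↔
      ∃ a ∈ (young r (fun k => if k = v - 1 then lam (v - 1) + m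
          else if k = v then lam v - m else lam k)) ⊓ young r lam,
        ∃ h ∈ H, σ = a * h := by
  intro σ
  have hwit : ∀ ρ : Fin r, ∃ k, (ρ : ℕ) < ∑ i ∈ Finset.range (k + 1), lam i := by
    intro ρ
    refine ⟨n - 1, ?_⟩
    have : n - 1 + 1 = n := by omega
    rw [this, hsum]
    exact ρ.isLt
  constructor
  · intro hσ
    have hσ' : ∀ ρ : Fin r, rowOf lam (σ ρ).val = rowOf lam ρ.val := hσ
    have hσinv : ∀ ρ : Fin r, rowOf lam (σ⁻¹ ρ).val = rowOf lam ρ.val := by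
      intro ρ
      have := hσ' (σ⁻¹ ρ)
      simpa using this.symm
    -- the permutation h : agrees with σ on row v, identity elsewhere
    set f : Fin r → Fin r := fun ρ => if rowOf lam ρ.val = v then σ ρ else ρ with hf
    set g : Fin r → Fin r := fun ρ => if rowOf lam ρ.val = v then σ⁻¹ ρ else ρ with hg
    have hgf : Function.LeftInverse g f := by
      intro ρ
      by_cases hρ : rowOf lam ρ.val = v
      · simp [hf, hg, hρ, hσ' ρ]
      · simp [hf, hg, hρ]
    have hfg : Function.RightInverse g f := by
      intro ρ
      by_cases hρ : rowOf lam ρ.val = v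
      · simp [hf, hg, hρ, show rowOf lam ↑((Equiv.symm σ) ρ) = v from by simpa [hρ] using hσinv ρ]
      · simp [hf, hg, hρ]
    set h : Equiv.Perm (Fin r) := ⟨f, g, hgf, hfg⟩ with hh
    have hhapp : ∀ ρ, h ρ = f ρ := fun ρ => rfl
    have hhinv : ∀ ρ, h⁻¹ ρ = g ρ := fun ρ => rfl
    have hhH : h ∈ H := by
      refine hfull h fun ρ hρ => ?_
      simp [hhapp, hf, hρ]
    set a : Equiv.Perm (Fin r) := σ * h⁻¹ with ha
    have haapp : ∀ ρ : Fin r, a ρ = if rowOf lam ρ.val = v then ρ else σ ρ := by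
      intro ρ
      by_cases hρ : rowOf lam ρ.val = v
      · simp [ha, Equiv.Perm.mul_apply, hhinv, hg, hρ]
      · simp [ha, Equiv.Perm.mul_apply, hhinv, hg, hρ]
    have hay : a ∈ young r lam := by
      intro ρ
      by_cases hρ : rowOf lam ρ.val = v
      · rw [haapp ρ, if_pos hρ]
      · rw [haapp ρ, if_neg hρ]; exact hσ' ρ
    have hay' : a ∈ young r (fun k => if k = v - 1 then lam (v - 1) + m
          else if k = v then lam v - m else lam k) := by
      intro ρ
      by_cases hρ : rowOf lam ρ.val = v
      · rw [haapp ρ, if_pos hρ]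
      · rw [haapp ρ, if_neg hρ]
        have h1 : rowOf lam (σ ρ).val ≠ v := by rw [hσ' ρ]; exact hρ
        rw [row_eq_aux lam v m _ hv1 hm (hwit (σ ρ)) h1,
            row_eq_aux lam v m _ hv1 hm (hwit ρ) hρ]
        exact hσ' ρ
    exact ⟨a, Subgroup.mem_inf.mpr ⟨hay', hay⟩, h, hhH,
      (inv_mul_cancel_right σ h).symm⟩
  · rintro ⟨a, hain, h, hhH, rfl⟩
    exact (young r lam).mul_mem (Subgroup.mem_inf.mp hain).2 (hH hhH)
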